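/- Let ω be a weight function (continuous, increasing, ω(2t) ≤ L(ω(t)+1), log t = o(ω(t)), ω(e^t) convex), and let W_α^{(λ)} = exp(φ*_ω(λ|α|)/λ) with associated function ω_{W^{(λ)}}(t) = sup_{α: α_j=0 if t_j=0} log(|t^α|/W_α^{(λ)}) for t ∈ ℝ^d. Then λ·ω_{W^{(λ)}}(t) ≤ ω(|t|) for all t ∈ ℝ^d, and there exist B > 0 (independent of λ) and C_λ > 0 such that ω(|t|) ≤ B·λ·ω_{W^{(λ)}}(t) + C_λ for all t ∈ ℝ^d. -/

import Mathlib

open scoped BigOperators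

/-- The Young conjugate `φ*_ω(s) = sup_{t ≥ 0} (t s - ω(e^t))`. -/
noncomputable def youngConj (ω : ℝ → ℝ) (s : ℝ) : ℝ :=
  ⨆ t : {t : ℝ // 0 ≤ t}, ((t : ℝ) * s - ω (Real.exp (t : ℝ)))

/-- The weight matrix entry `W_α^{(λ)} = exp(φ*_ω(λ|α|)/λ)`. -/
noncomputable def Wmat (ω : ℝ → ℝ) (d : ℕ) (lam : ℝ) (α : Fin d → ℕ) : ℝ :=
  Real.exp (youngConj ω (lam * (∑ j, α j)) / lam)

/-- The associated function of the sequence `W^{(λ)}`: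
`ω_{W^{(λ)}}(t) = sup { log(|t^α|/W_α^{(λ)}) : α_j = 0 whenever t_j = 0 }`. -/
noncomputable def assocW (ω : ℝ → ℝ) (d : ℕ) (lam : ℝ)
    (t : EuclideanSpace ℝ (Fin d)) : ℝ :=
  ⨆ α : {α : Fin d → ℕ // ∀ j, t j = 0 → α j = 0},
    Real.log (|∏ j, (t j) ^ (α.1 j)| / Wmat ω d lam α.1)

section Aux

variable {ω : ℝ → ℝ}

/-- superlinearity of `u ↦ ω (e^u)` coming from `log = o(ω)`. -/
lemma phi_superlin (hnonneg : ∀ t, 0 ≤ t → 0 ≤ ω t)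
    (hγ : (fun t => Real.log t) =o[Filter.atTop] ω) {c : ℝ} (hc : 0 < c) :
    ∃ V : ℝ, 1 ≤ V ∧ ∀ u, V ≤ u → c * u ≤ ω (Real.exp u) := by
  have h := (hγ.def (by positivity : (0:ℝ) < 1/c))
  rw [Filter.eventually_atTop] at h
  obtain ⟨T, hT⟩ := h
  refine ⟨max (Real.log (max T 1)) 1, le_max_right _ _, fun u hu => ?_⟩
  have hu1 : (1:ℝ) ≤ u := le_trans (le_max_right _ _) hu
  have hexp : T ≤ Real.exp u := by
    calc T ≤ max T 1 := le_max_left _ _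
    _ = Real.exp (Real.log (max T 1)) :=
        (Real.exp_log (by positivity)).symm
    _ ≤ Real.exp u := Real.exp_le_exp.2 (le_trans (le_max_left _ _) hu)
  have := hT _ hexp
  rw [Real.log_exp] at this
  have h1 : u ≤ 1/c * ω (Real.exp u) := by
    have hωnn : 0 ≤ ω (Real.exp u) := hnonneg _ (Real.exp_pos u).le
    calc u ≤ ‖u‖ := le_abs_self u
    _ ≤ 1/c * ‖ω (Real.exp u)‖ := this
    _ = 1/c * ω (Real.exp u) := by rw [Real.norm_eq_abs, abs_of_nonneg hωnn]
  calc c * u ≤ c * (1/c * ω (Real.exp u)) := by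
        exact mul_le_mul_of_nonneg_left h1 hc.le
  _ = ω (Real.exp u) := by field_simp

lemma yc_bdd (hnonneg : ∀ t, 0 ≤ t → 0 ≤ ω t)
    (hγ : (fun t => Real.log t) =o[Filter.atTop] ω) {s : ℝ} (hs : 0 ≤ s) :
    BddAbove (Set.range fun t : {t : ℝ // 0 ≤ t} =>
      ((t : ℝ) * s - ω (Real.exp (t : ℝ)))) := by
  obtain ⟨V, hV1, hV⟩ := phi_superlin hnonneg hγ (show (0:ℝ) < s + 1 by linarith)
  refine ⟨V * s, ?_⟩
  rintro x ⟨⟨u, hu⟩, rfl⟩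
  simp only
  rcases le_or_gt V u with h | h
  · have := hV u h
    nlinarith [hnonneg (Real.exp u) (Real.exp_pos u).le]
  · have := hnonneg (Real.exp u) (Real.exp_pos u).le
    nlinarith

lemma yc_ge (hnonneg : ∀ t, 0 ≤ t → 0 ≤ ω t)
    (hγ : (fun t => Real.log t) =o[Filter.atTop] ω) {s u : ℝ} (hs : 0 ≤ s)
    (hu : 0 ≤ u) : u * s - ω (Real.exp u) ≤ youngConj ω s :=
  le_ciSup (yc_bdd hnonneg hγ hs) ⟨u, hu⟩

lemma yc_le {a s : ℝ} (h : ∀ u : ℝ, 0 ≤ u → u * s - ω (Real.exp u) ≤ a) :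
    youngConj ω s ≤ a := by
  haveI : Nonempty {t : ℝ // 0 ≤ t} := ⟨⟨0, le_refl 0⟩⟩
  exact ciSup_le fun ⟨u, hu⟩ => h u hu

lemma yc_zero (hnonneg : ∀ t, 0 ≤ t → 0 ≤ ω t) (hω1 : ω 1 = 0)
    (hγ : (fun t => Real.log t) =o[Filter.atTop] ω) :
    youngConj ω 0 = 0 := by
  apply le_antisymm
  · exact yc_le fun u hu => by
      simpa using neg_nonpos.2 (hnonneg _ (Real.exp_pos u).le)
  · have := yc_ge hnonneg hγ (le_refl (0:ℝ)) (le_refl (0:ℝ))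
    simpa [hω1] using this

lemma yc_mono (hnonneg : ∀ t, 0 ≤ t → 0 ≤ ω t)
    (hγ : (fun t => Real.log t) =o[Filter.atTop] ω) {s₁ s₂ : ℝ}
    (h0 : 0 ≤ s₁) (h : s₁ ≤ s₂) : youngConj ω s₁ ≤ youngConj ω s₂ := by
  refine yc_le fun u hu => le_trans ?_ (yc_ge hnonneg hγ (le_trans h0 h) hu)
  nlinarith

/-- each coordinate is dominated by the norm -/
lemma coord_le_norm {d : ℕ} (t : EuclideanSpace ℝ (Fin d)) (j : Fin d) :
    |t j| ≤ ‖t‖ := by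
  rw [EuclideanSpace.norm_eq]
  have h1 : |t j| = Real.sqrt (‖t j‖ ^ 2) := by
    rw [Real.sqrt_sq_eq_abs, Real.norm_eq_abs, abs_abs]
  rw [h1]
  apply Real.sqrt_le_sqrt
  exact Finset.single_le_sum (f := fun i => ‖t i‖ ^ 2)
    (fun i _ => by positivity) (Finset.mem_univ j)

/-- The main per-multiindex estimate. -/
lemma term_le (hnonneg : ∀ t, 0 ≤ t → 0 ≤ ω t)
    (hγ : (fun t => Real.log t) =o[Filter.atTop] ω)
    {d : ℕ} {lam : ℝ} (hlam : 0 < lam) (t : EuclideanSpace ℝ (Fin d))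
    (α : Fin d → ℕ) (hadm : ∀ j, t j = 0 → α j = 0) :
    lam * Real.log (|∏ j, (t j) ^ (α j)| / Wmat ω d lam α) ≤ ω (max ‖t‖ 1) := by
  set R : ℝ := max ‖t‖ 1 with hR
  have hR1 : (1:ℝ) ≤ R := le_max_right _ _
  have hR0 : (0:ℝ) < R := lt_of_lt_of_le one_pos hR1
  have hcoord : ∀ j, |t j| ≤ R := fun j =>
    le_trans (coord_le_norm t j) (le_max_left _ _)
  have hne : ∀ j, (t j) ^ (α j) ≠ 0 := by
    intro j
    rcases eq_or_ne (t j) 0 with h | h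
    · rw [h, hadm j h]; norm_num
    · exact pow_ne_zero _ h
  have hPne : (∏ j, (t j) ^ (α j)) ≠ 0 :=
    Finset.prod_ne_zero_iff.2 fun j _ => hne j
  have hPpos : 0 < |∏ j, (t j) ^ (α j)| := abs_pos.2 hPne
  set N : ℕ := ∑ j, α j with hN
  have hWpos : (0:ℝ) < Wmat ω d lam α := Real.exp_pos _
  have hlogW : Real.log (Wmat ω d lam α) = youngConj ω (lam * N) / lam := by
    rw [Wmat, Real.log_exp]
  -- log |∏| ≤ N * log R
  have hlogP : Real.log (|∏ j, (t j) ^ (α j)|) ≤ (N : ℝ) * Real.log R := by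
    rw [Finset.abs_prod, Real.log_prod (fun j _ => abs_ne_zero.2 (hne j))]
    have : ∀ j ∈ Finset.univ, Real.log |t j ^ α j| ≤ (α j : ℝ) * Real.log R := by
      intro j _
      rw [abs_pow, Real.log_pow]
      rcases eq_or_ne (t j) 0 with h | h
      · rw [hadm j h]; simp
      · have h1 : Real.log |t j| ≤ Real.log R :=
          Real.log_le_log (abs_pos.2 h) (hcoord j)
        exact mul_le_mul_of_nonneg_left h1 (Nat.cast_nonneg _)
    calc ∑ j, Real.log |t j ^ α j| ≤ ∑ j, (α j : ℝ) * Real.log R :=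
          Finset.sum_le_sum this
    _ = (N : ℝ) * Real.log R := by rw [hN, ← Finset.sum_mul]; push_cast; ring
  have hlogR : 0 ≤ Real.log R := Real.log_nonneg hR1
  have hyc : Real.log R * (lam * N) - ω R ≤ youngConj ω (lam * N) := by
    have := yc_ge hnonneg hγ (s := lam * N) (u := Real.log R)
      (by positivity) hlogR
    rwa [Real.exp_log hR0] at this
  rw [Real.log_div hPpos.ne' hWpos.ne', hlogW]
  have hexpand : lam * (Real.log |∏ j, (t j) ^ (α j)| - youngConj ω (lam * N) / lam)
      = lam * Real.log |∏ j, (t j) ^ (α j)| - youngConj ω (lam * N) := by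
    field_simp
  rw [hexpand]
  nlinarith [mul_le_mul_of_nonneg_left hlogP hlam.le]

lemma omega_max_le (hnonneg : ∀ t, 0 ≤ t → 0 ≤ ω t) (hω1 : ω 1 = 0)
    {x : ℝ} (hx : 0 ≤ x) : ω (max x 1) ≤ ω x := by
  rcases le_total 1 x with h | h
  · rw [max_eq_left h]
  · rw [max_eq_right h, hω1]; exact hnonneg x hx

lemma assocW_bdd (hnonneg : ∀ t, 0 ≤ t → 0 ≤ ω t)
    (hγ : (fun t => Real.log t) =o[Filter.atTop] ω)
    {d : ℕ} {lam : ℝ} (hlam : 0 < lam) (t : EuclideanSpace ℝ (Fin d)) :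
    BddAbove (Set.range fun α : {α : Fin d → ℕ // ∀ j, t j = 0 → α j = 0} =>
      Real.log (|∏ j, (t j) ^ (α.1 j)| / Wmat ω d lam α.1)) := by
  refine ⟨ω (max ‖t‖ 1) / lam, ?_⟩
  rintro x ⟨α, rfl⟩
  rw [le_div_iff₀ hlam]
  have := term_le hnonneg hγ hlam t α.1 α.2
  linarith

lemma assocW_ge (hnonneg : ∀ t, 0 ≤ t → 0 ≤ ω t)
    (hγ : (fun t => Real.log t) =o[Filter.atTop] ω)
    {d : ℕ} {lam : ℝ} (hlam : 0 < lam) (t : EuclideanSpace ℝ (Fin d))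
    (α : Fin d → ℕ) (hadm : ∀ j, t j = 0 → α j = 0) :
    Real.log (|∏ j, (t j) ^ (α j)| / Wmat ω d lam α) ≤ assocW ω d lam t :=
  le_ciSup (assocW_bdd hnonneg hγ hlam t) ⟨α, hadm⟩

lemma assocW_nonneg (hnonneg : ∀ t, 0 ≤ t → 0 ≤ ω t) (hω1 : ω 1 = 0)
    (hγ : (fun t => Real.log t) =o[Filter.atTop] ω)
    {d : ℕ} {lam : ℝ} (hlam : 0 < lam) (t : EuclideanSpace ℝ (Fin d)) :
    0 ≤ assocW ω d lam t := by
  have h := assocW_ge hnonneg hγ hlam t (fun _ => 0) (fun j _ => rfl)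
  have hW : Wmat ω d lam (fun _ => 0) = 1 := by
    rw [Wmat]
    simp [yc_zero hnonneg hω1 hγ]
  rw [hW] at h
  simpa using h


lemma doubling_iter {L : ℝ} (hL : 1 ≤ L)
    (h2 : ∀ x : ℝ, 0 ≤ x → ω (2 * x) ≤ L * (ω x + 1))
    (hnonneg : ∀ t, 0 ≤ t → 0 ≤ ω t) :
    ∀ k : ℕ, ∀ x : ℝ, 0 ≤ x → ω (2 ^ k * x) ≤ L ^ k * ω x + k * L ^ k := by
  intro k
  induction k with
  | zero => intro x hx; simp
  | succ k ih =>
    intro x hx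
    have h1 : (2:ℝ) ^ (k+1) * x = 2 * (2 ^ k * x) := by ring
    rw [h1]
    have h3 := h2 (2 ^ k * x) (by positivity)
    have h4 := ih x hx
    have hL0 : (0:ℝ) < L := lt_of_lt_of_le one_pos hL
    have hLk : (1:ℝ) ≤ L ^ k := one_le_pow₀ hL
    have hLk1 : L ≤ L ^ (k+1) := by
      calc L = L ^ 1 := (pow_one L).symm
      _ ≤ L ^ (k+1) := pow_le_pow_right₀ hL (by omega)
    have hpow : L ^ (k+1) = L * L ^ k := by ring
    push_cast
    nlinarith [hnonneg x hx, hnonneg (2^k*x) (by positivity : (0:ℝ) ≤ 2^k*x)]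

lemma subgrad (hmono : Monotone ω)
    (hconv : ConvexOn ℝ (Set.Ici 0) (fun v => ω (Real.exp v)))
    {u h : ℝ} (hu : 0 ≤ u) (hh : 0 < h) :
    ∀ u' : ℝ, 0 ≤ u' →
      u' * ((ω (Real.exp (u+h)) - ω (Real.exp u)) / h) - ω (Real.exp u')
        ≤ u * ((ω (Real.exp (u+h)) - ω (Real.exp u)) / h) - ω (Real.exp u)
          + ((ω (Real.exp (u+h)) - ω (Real.exp u)) / h) * h := by
  set φ : ℝ → ℝ := fun v => ω (Real.exp v) with hφ
  set σ : ℝ := (φ (u+h) - φ u) / h with hσdef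
  have hσh : σ * h = φ (u+h) - φ u := div_mul_cancel₀ _ hh.ne'
  have hσ0 : 0 ≤ σ := div_nonneg
    (sub_nonneg.2 (hmono (Real.exp_le_exp.2 (by linarith)))) hh.le
  intro u' hu'
  rcases le_or_gt (u+h) u' with hc | hc
  · rcases eq_or_lt_of_le hc with rfl | hc'
    · nlinarith
    · have hs := hconv.secant_mono (a := u) (x := u+h) (y := u')
        (Set.mem_Ici.2 hu) (Set.mem_Ici.2 (by linarith)) (Set.mem_Ici.2 hu')
        (by intro hcon; nlinarith [congrArg id hcon])
        (by intro hcon; nlinarith [congrArg id hcon]) hc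
      have hsimp : u + h - u = h := by ring
      rw [hsimp] at hs
      -- hs : (φ (u+h) - φ u)/h ≤ (φ u' - φ u)/(u'-u)
      have h2 : σ * (u' - u) ≤ φ u' - φ u := by
        have hpos : (0:ℝ) < u' - u := by linarith
        rw [hσdef]
        calc ((φ (u+h) - φ u)/h) * (u' - u)
            ≤ ((φ u' - φ u)/(u'-u)) * (u' - u) :=
              mul_le_mul_of_nonneg_right hs hpos.le
        _ = φ u' - φ u := div_mul_cancel₀ _ hpos.ne'
      nlinarith
  · rcases le_or_gt u' u with hc2 | hc2
    · rcases eq_or_lt_of_le hc2 with rfl | hc2'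
      · nlinarith
      · have hs := hconv.secant_mono (a := u) (x := u') (y := u+h)
          (Set.mem_Ici.2 hu) (Set.mem_Ici.2 hu') (Set.mem_Ici.2 (by linarith))
          (by intro hcon; nlinarith [congrArg id hcon])
          (by intro hcon; nlinarith [congrArg id hcon]) (by linarith)
        have hsimp : u + h - u = h := by ring
        rw [hsimp] at hs
        -- hs : (φ u' - φ u)/(u'-u) ≤ (φ(u+h)-φ u)/h = σ
        have hneg : u' - u < 0 := by linarith
        have h2 : φ u - φ u' ≤ σ * (u - u') := by
          have heq : (φ u' - φ u)/(u'-u) = (φ u - φ u')/(u-u') := by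
            rw [← neg_div_neg_eq]; ring_nf
          rw [heq] at hs
          have hpos : (0:ℝ) < u - u' := by linarith
          have := mul_le_mul_of_nonneg_right hs hpos.le
          rw [← hσdef] at this
          rwa [div_mul_cancel₀ _ hpos.ne'] at this
        nlinarith
    · -- u < u' < u + h
      have hm : φ u ≤ φ u' := hmono (Real.exp_le_exp.2 hc2.le)
      nlinarith

end Aux

set_option maxHeartbeats 1600000 in
theorem stmt17 (ω : ℝ → ℝ) (hcont : Continuous ω) (hmono : Monotone ω)
    (hnonneg : ∀ t, 0 ≤ t → 0 ≤ ω t) (hω1 : ∀ t ∈ Set.Icc (0 : ℝ) 1, ω t = 0)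
    (hα : ∃ L : ℝ, 1 ≤ L ∧ ∀ t : ℝ, 0 ≤ t → ω (2 * t) ≤ L * (ω t + 1))
    (hconv : ConvexOn ℝ (Set.Ici 0) (fun t => ω (Real.exp t)))
    (hγ : (fun t => Real.log t) =o[Filter.atTop] ω)
    (d : ℕ) :
    (∀ lam : ℝ, 0 < lam → ∀ t : EuclideanSpace ℝ (Fin d),
        lam * assocW ω d lam t ≤ ω ‖t‖) ∧
    (∃ B : ℝ, 0 < B ∧ ∀ lam : ℝ, 0 < lam → ∃ C : ℝ, 0 < C ∧
        ∀ t : EuclideanSpace ℝ (Fin d), ω ‖t‖ ≤ B * lam * assocW ω d lam t + C) := by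
  have hω1' : ω 1 = 0 := hω1 1 ⟨zero_le_one, le_refl 1⟩
  constructor
  · intro lam hlam t
    have hbd : assocW ω d lam t ≤ ω (max ‖t‖ 1) / lam := by
      haveI : Nonempty {α : Fin d → ℕ // ∀ j, t j = 0 → α j = 0} :=
        ⟨⟨fun _ => 0, fun j _ => rfl⟩⟩
      refine ciSup_le fun α => ?_
      rw [le_div_iff₀ hlam]
      have := term_le hnonneg hγ hlam t α.1 α.2
      linarith
    have h2 : ω (max ‖t‖ 1) ≤ ω ‖t‖ := omega_max_le hnonneg hω1' (norm_nonneg t)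
    calc lam * assocW ω d lam t ≤ lam * (ω (max ‖t‖ 1) / lam) :=
          mul_le_mul_of_nonneg_left hbd hlam.le
    _ = ω (max ‖t‖ 1) := by field_simp
    _ ≤ ω ‖t‖ := h2
  · obtain ⟨L, hL1, hdb⟩ := hα
    have hL0 : (0:ℝ) < L := lt_of_lt_of_le one_pos hL1
    set M : ℝ := L ^ d with hM
    have hM1 : (1:ℝ) ≤ M := one_le_pow₀ hL1
    refine ⟨4 * M, by positivity, ?_⟩
    intro lam hlam
    obtain ⟨V, hV1, hV⟩ := phi_superlin hnonneg hγ
      (show (0:ℝ) < 4 * lam by linarith)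
    set E : ℝ := 2 ^ d with hE
    have hEpos : (0:ℝ) < E := by positivity
    have hCnn : 0 ≤ ω (E * Real.exp V) := hnonneg _ (by positivity)
    refine ⟨ω (E * Real.exp V) + (4 + d) * M + 1, by positivity, ?_⟩
    intro t
    have hA0 : 0 ≤ assocW ω d lam t := assocW_nonneg hnonneg hω1' hγ hlam t
    rcases le_or_gt ‖t‖ (E * Real.exp V) with hsmall | hbig
    · have h1 : ω ‖t‖ ≤ ω (E * Real.exp V) := hmono hsmall
      have h2 : 0 ≤ 4 * M * lam * assocW ω d lam t := by positivity
      have h3 : (0:ℝ) ≤ (4 + d) * M := by positivity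
      linarith
    · -- large norm case
      have htpos : 0 < ‖t‖ := lt_trans (by positivity) hbig
      have hd : 0 < d := by
        rcases Nat.eq_zero_or_pos d with h0 | h; swap
        · exact h
        · exfalso
          have ht0 : t = 0 := by
            subst h0
            ext j
            exact absurd j.2 (by omega)
          rw [ht0, norm_zero] at htpos
          exact absurd htpos (lt_irrefl 0)
      obtain ⟨j₀, -, hj₀⟩ := Finset.exists_max_image Finset.univ
        (fun j => |t j|) (Finset.univ_nonempty_iff.2 ⟨⟨0, hd⟩⟩)
      set a : ℝ := |t j₀| with ha
      have ha0' : 0 ≤ a := abs_nonneg _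
      have hsqrtd : Real.sqrt d ≤ E := by
        have hdlt : (d:ℝ) < E := by
          have := @Nat.lt_two_pow_self d
          calc (d:ℝ) < ((2:ℕ) ^ d : ℕ) := by exact_mod_cast this
          _ = E := by push_cast; rfl
        have hE1 : (1:ℝ) ≤ E := one_le_pow₀ one_le_two
        have h4 : (d : ℝ) ≤ E ^ 2 := by nlinarith
        calc Real.sqrt d ≤ Real.sqrt (E ^ 2) := Real.sqrt_le_sqrt h4
        _ = E := Real.sqrt_sq hEpos.le
      have hnorm_le : ‖t‖ ≤ E * a := by
        have h1 : ‖t‖ ≤ Real.sqrt d * a := by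
          rw [EuclideanSpace.norm_eq]
          have hsum : ∑ i, ‖t i‖ ^ 2 ≤ (d:ℝ) * a ^ 2 := by
            calc ∑ i, ‖t i‖ ^ 2 ≤ ∑ _i : Fin d, a ^ 2 := by
                  refine Finset.sum_le_sum fun i _ => ?_
                  rw [Real.norm_eq_abs]
                  have := hj₀ i (Finset.mem_univ i)
                  nlinarith [abs_nonneg (t i)]
            _ = (d:ℝ) * a ^ 2 := by simp [Finset.sum_const]
          calc Real.sqrt (∑ i, ‖t i‖ ^ 2) ≤ Real.sqrt ((d:ℝ) * a ^ 2) :=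
                Real.sqrt_le_sqrt hsum
          _ = Real.sqrt d * a := by
              rw [Real.sqrt_mul (Nat.cast_nonneg d), Real.sqrt_sq ha0']
        calc ‖t‖ ≤ Real.sqrt d * a := h1
        _ ≤ E * a := mul_le_mul_of_nonneg_right hsqrtd ha0'
      set u : ℝ := Real.log (‖t‖ / E) with hudef
      have hexpu : Real.exp u = ‖t‖ / E := Real.exp_log (by positivity)
      have huV : V ≤ u := by
        have hlt : Real.exp V ≤ ‖t‖ / E := by
          rw [le_div_iff₀ hEpos]; nlinarith
        calc V = Real.log (Real.exp V) := (Real.log_exp V).symm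
        _ ≤ u := Real.log_le_log (Real.exp_pos V) hlt
      have hu0 : 0 ≤ u := le_trans (by linarith) huV
      have hau : Real.exp u ≤ a := by
        rw [hexpu, div_le_iff₀ hEpos]; nlinarith
      have ha0 : 0 < a := lt_of_lt_of_le (Real.exp_pos u) hau
      have htj₀ : t j₀ ≠ 0 := fun h => by
        rw [ha, h, abs_zero] at ha0; exact absurd ha0 (lt_irrefl 0)
      -- the convex-slope data
      set hstep : ℝ := 1 / (2 * L ^ 2) with hhdef
      have hhpos : 0 < hstep := by positivity
      have hhalf : hstep * L ^ 2 = 1 / 2 := by rw [hhdef]; field_simp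
      have hh1 : hstep ≤ 1 := by
        rw [hhdef, div_le_one (by positivity)]; nlinarith
      set φ : ℝ → ℝ := fun v => ω (Real.exp v) with hφ
      set σ : ℝ := (φ (u + hstep) - φ u) / hstep with hσ
      have hσ0 : 0 ≤ σ := div_nonneg
        (sub_nonneg.2 (hmono (Real.exp_le_exp.2 (by linarith)))) hhpos.le
      set n : ℕ := ⌊σ / lam⌋₊ with hn
      have hn_le : lam * n ≤ σ := by
        have h1 := Nat.floor_le (show 0 ≤ σ / lam from div_nonneg hσ0 hlam.le)
        calc lam * n ≤ lam * (σ / lam) := mul_le_mul_of_nonneg_left h1 hlam.le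
        _ = σ := by field_simp
      have hn_ge : σ - lam ≤ lam * n := by
        have h2 : σ / lam < (n:ℝ) + 1 := by
          exact_mod_cast Nat.lt_floor_add_one (σ / lam)
        nlinarith [(div_lt_iff₀ hlam).1 h2]
      -- the multi-index
      set α : Fin d → ℕ := fun j => if j = j₀ then n else 0 with hαdef
      have hadm : ∀ j, t j = 0 → α j = 0 := by
        intro j hj
        have hne : j ≠ j₀ := fun h => htj₀ (h ▸ hj)
        simp [hαdef, hne]
      have hprod : (∏ j, (t j) ^ (α j)) = (t j₀) ^ n := by
        have hcg : ∀ j ∈ Finset.univ, (t j) ^ (α j)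
            = if j = j₀ then (t j₀) ^ n else 1 := by
          intro j _
          by_cases h : j = j₀
          · subst h; simp [hαdef]
          · simp [hαdef, h]
        rw [Finset.prod_congr rfl hcg,
          Finset.prod_ite_eq' Finset.univ j₀ (fun _ => (t j₀) ^ n)]
        simp
      have hsum : (∑ j, α j) = n := by
        rw [hαdef, Finset.sum_ite_eq' Finset.univ j₀ (fun _ => n)]
        simp
      have hterm : Real.log (|∏ j, (t j) ^ (α j)| / Wmat ω d lam α)
          = (n:ℝ) * Real.log a - youngConj ω (lam * n) / lam := by
        rw [hprod, Wmat, hsum, Real.log_div (abs_ne_zero.2 (pow_ne_zero _ htj₀))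
          (Real.exp_ne_zero _), abs_pow, Real.log_pow, Real.log_exp, ha]
      have hlow := assocW_ge hnonneg hγ hlam t α hadm
      rw [hterm] at hlow
      have hlow' : lam * (n:ℝ) * Real.log a - youngConj ω (lam * n)
          ≤ lam * assocW ω d lam t := by
        have := mul_le_mul_of_nonneg_left hlow hlam.le
        have hexpand : lam * ((n:ℝ) * Real.log a - youngConj ω (lam * n) / lam)
            = lam * (n:ℝ) * Real.log a - youngConj ω (lam * n) := by
          field_simp
        linarith [hexpand ▸ this]
      -- Young conjugate estimates
      have hyc1 : youngConj ω (lam * n) ≤ youngConj ω σ :=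
        yc_mono hnonneg hγ (by positivity) hn_le
      have hyc2 : youngConj ω σ ≤ u * σ - φ u + σ * hstep := by
        refine yc_le fun u' hu' => ?_
        exact subgrad hmono hconv hu0 hhpos u' hu'
      have hloga : u ≤ Real.log a := by
        calc u = Real.log (Real.exp u) := (Real.log_exp u).symm
        _ ≤ Real.log a := Real.log_le_log (Real.exp_pos u) hau
      have hstepb : σ * hstep ≤ φ u / 2 + 1 := by
        have hσh : σ * hstep = φ (u + hstep) - φ u :=
          div_mul_cancel₀ _ hhpos.ne'
        have hcvx := hconv.2 (x := u) (y := u + 1) (Set.mem_Ici.2 hu0)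
          (Set.mem_Ici.2 (by linarith : (0:ℝ) ≤ u + 1))
          (by linarith : (0:ℝ) ≤ 1 - hstep) hhpos.le
          (by ring : (1 - hstep) + hstep = 1)
        simp only [smul_eq_mul] at hcvx
        have heval : (1 - hstep) * u + hstep * (u + 1) = u + hstep := by ring
        rw [heval] at hcvx
        -- hcvx : φ (u + hstep) ≤ (1 - hstep) * φ u + hstep * φ (u + 1)
        have hu1 : φ (u + 1) ≤ L ^ 2 * φ u + 2 * L ^ 2 := by
          have hexp4 : Real.exp (u + 1) ≤ 2 ^ 2 * Real.exp u := by
            rw [Real.exp_add]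
            have h4 : Real.exp 1 ≤ 4 := by
              have := Real.exp_one_lt_d9
              linarith
            nlinarith [Real.exp_pos u]
          have hd2 := doubling_iter hL1 hdb hnonneg 2 (Real.exp u)
            (Real.exp_pos u).le
          have hm : φ (u + 1) ≤ ω (2 ^ 2 * Real.exp u) := hmono hexp4
          push_cast at hd2
          calc φ (u + 1) ≤ ω (2 ^ 2 * Real.exp u) := hm
          _ ≤ L ^ 2 * ω (Real.exp u) + 2 * L ^ 2 := hd2
          _ = L ^ 2 * φ u + 2 * L ^ 2 := rfl
        have hφnn : 0 ≤ φ u := hnonneg _ (Real.exp_pos u).le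
        have m1 : hstep * φ (u + 1) ≤ hstep * (L ^ 2 * φ u + 2 * L ^ 2) :=
          mul_le_mul_of_nonneg_left hu1 hhpos.le
        have m0 : 0 ≤ hstep * φ u := mul_nonneg hhpos.le hφnn
        have meq : hstep * (L ^ 2 * φ u + 2 * L ^ 2) = φ u / 2 + 1 := by
          calc hstep * (L ^ 2 * φ u + 2 * L ^ 2)
              = (hstep * L ^ 2) * φ u + (hstep * L ^ 2) * 2 := by ring
          _ = φ u / 2 + 1 := by rw [hhalf]; ring
        linarith only [hσh, hcvx, m1, m0, meq]
      have hlamu : lam * u ≤ φ u / 4 := by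
        have := hV u huV
        have hφu : ω (Real.exp u) = φ u := rfl
        linarith [hφu ▸ this]
      -- the chain
      have hX0 : (0:ℝ) ≤ lam * n := by positivity
      have hA1 : lam * (n:ℝ) * u ≤ lam * (n:ℝ) * Real.log a := by
        exact mul_le_mul_of_nonneg_left hloga hX0
      have hA2 : (σ - lam) * u ≤ lam * (n:ℝ) * u :=
        mul_le_mul_of_nonneg_right hn_ge hu0
      have hkey : φ u ≤ 4 * (lam * assocW ω d lam t) + 4 := by
        linarith only [hlow', hA1, hA2, hyc1, hyc2, hstepb, hlamu]
      -- conclude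
      have hteq : E * Real.exp u = ‖t‖ := by
        rw [hexpu]; field_simp
      have hfin := doubling_iter hL1 hdb hnonneg d (Real.exp u) (Real.exp_pos u).le
      have hfin' : ω ‖t‖ ≤ M * φ u + (d:ℝ) * M := by
        rw [← hteq]
        calc ω (E * Real.exp u) = ω (2 ^ d * Real.exp u) := by rw [hE]
        _ ≤ L ^ d * ω (Real.exp u) + (d:ℝ) * L ^ d := hfin
        _ = M * φ u + (d:ℝ) * M := by rw [hM]
      have hMkey := mul_le_mul_of_nonneg_left hkey (by positivity : (0:ℝ) ≤ M)
      have hM0 : (0:ℝ) ≤ M := by positivity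
      linarith only [hfin', hMkey, hCnn]
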